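/- arXiv:1312.0933 — 4 statements merged into one kernel-verified Lean document; each statement's English description precedes it below -/
import Mathlib

section
/- Let ρ > 0 and let (a^(n))_{n≥1} be a sequence where a^(n) = (a^(n)_1, ..., a^(n)_{d_n}) ∈ ℂ^{d_n} has i.i.d. coordinates with common distribution P satisfying P{z : log|z| > R} = O(R^{-ρ}) as R → ∞ and having bounded density with respect to Lebesgue measure on ℂ. Assume d_n ≤ C n^m for some constants C, m, and ρ(1-ε) > m+1 for some ε ∈ (0,1). Then almost surely (1/n) log ‖a^(n)‖ → 0 as n → ∞, where ‖·‖ is the ℓ² norm. -/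
/-!
STATEMENT 2:
Let ρ > 0 and let (a^(n))_{n≥1}, a^(n) ∈ ℂ^{d_n}, be a family whose coordinates
(indexed by the sigma type Σ n, Fin (d n)) are i.i.d. with common law μ on ℂ which
has bounded density w.r.t. Lebesgue measure and satisfies the log-tail bound
μ{z : log|z| > R} = O(R^{-ρ}).  Assume d_n ≤ C n^m and ρ(1-ε) > m+1 for some
ε ∈ (0,1).  Then almost surely (1/n) log ‖a^(n)‖ → 0, ‖·‖ the ℓ² norm.
-/

open MeasureTheory Filter ProbabilityTheory
open scoped ENNReal NNReal

lemma bc_helper {Ω : Type*} [MeasurableSpace Ω] (P : Measure Ω) [IsProbabilityMeasure P]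
    (s : ℕ → Set Ω) (f : ℕ → ℝ) (hf0 : ∀ n, 0 ≤ f n) (hf : Summable f) (N0 : ℕ)
    (h : ∀ n ≥ N0, P (s n) ≤ ENNReal.ofReal (f n)) :
    ∀ᵐ ω ∂P, ∀ᶠ n in atTop, ω ∉ s n := by
  set g : ℕ → ℝ := fun n => if n < N0 then 1 else f n with hg
  have hgs : Summable g := by
    refine (summable_nat_add_iff N0).mp ?_
    have heq : (fun n => g (n + N0)) = fun n => f (n + N0) := by
      funext n; simp [hg, Nat.not_lt.mpr (Nat.le_add_left _ _)]
    rw [heq]; exact (summable_nat_add_iff N0).mpr hf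
  have hg0 : ∀ n, 0 ≤ g n := by
    intro n; by_cases hn : n < N0 <;> simp [hg, hn, hf0 n]
  have hb : ∀ n, P (s n) ≤ ENNReal.ofReal (g n) := by
    intro n
    by_cases hn : n < N0
    · simp only [hg, if_pos hn, ENNReal.ofReal_one]; exact prob_le_one
    · simpa only [hg, if_neg hn] using h n (Nat.le_of_not_lt hn)
  have key : (∑' n, P (s n)) ≠ ⊤ := by
    refine ne_top_of_le_ne_top ?_ (ENNReal.tsum_le_tsum hb)
    rw [← ENNReal.ofReal_tsum_of_nonneg hg0 hgs]
    exact ENNReal.ofReal_ne_top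
  exact ae_eventually_notMem key

theorem stmt_2 {Ω : Type*} [MeasurableSpace Ω] (P : Measure Ω) [IsProbabilityMeasure P]
    (m : ℕ) (Cd : ℝ) (d : ℕ → ℕ) (hd : ∀ n, (d n : ℝ) ≤ Cd * (n : ℝ) ^ m)
    (ρ ε : ℝ) (hε0 : 0 < ε) (hε1 : ε < 1) (hρ : (m : ℝ) + 1 < ρ * (1 - ε))
    (μ : Measure ℂ) [IsProbabilityMeasure μ]
    -- tail bound: μ{z : log|z| > R} = O(R^{-ρ}) as R → ∞
    (Ct R0 : ℝ)
    (htail : ∀ R ≥ R0, μ {z : ℂ | R < Real.log ‖z‖} ≤ ENNReal.ofReal (Ct * R ^ (-ρ)))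
    -- bounded density with respect to Lebesgue measure on ℂ
    (C : ℝ) (φd : ℂ → ℝ) (hφd : ∀ z, 0 ≤ φd z ∧ φd z ≤ C)
    (hμd : μ = volume.withDensity fun z => ENNReal.ofReal (φd z))
    -- the i.i.d. coefficients
    (a : (Σ n : ℕ, Fin (d n)) → Ω → ℂ)
    (hmeas : ∀ i, Measurable (a i))
    (hindep : iIndepFun a P)
    (hlaw : ∀ i, Measure.map (a i) P = μ) :
    ∀ᵐ ω ∂P,
      Tendsto
        (fun n : ℕ =>
          (1 / (n : ℝ)) * Real.log (Real.sqrt (∑ j : Fin (d n), ‖a ⟨n, j⟩ ω‖ ^ 2)))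
        atTop (nhds 0) := by
  classical
  -- basic positivity facts
  have hρ0 : 0 < ρ := by nlinarith [Nat.cast_nonneg (α := ℝ) m]
  have hmρ : (m : ℝ) - ρ < -1 := by nlinarith
  have hC0 : (0:ℝ) ≤ C := le_trans (hφd 0).1 (hφd 0).2
  set Cd' : ℝ := max Cd 1 with hCd'def
  have hCd'0 : (0:ℝ) < Cd' := lt_of_lt_of_le one_pos (le_max_right _ _)
  have hd' : ∀ n : ℕ, (d n : ℝ) ≤ Cd' * (n : ℝ) ^ m := fun n =>
    le_trans (hd n) (mul_le_mul_of_nonneg_right (le_max_left _ _) (by positivity))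
  set Ct' : ℝ := max Ct 0 with hCt'def
  have hCt'0 : (0:ℝ) ≤ Ct' := le_max_right _ _
  -- upper-tail a.s. eventual bound, for each k
  have keyU : ∀ k : ℕ, ∀ᵐ ω ∂P, ∀ᶠ n in atTop, ∀ j : Fin (d n),
      ‖a ⟨n, j⟩ ω‖ ≤ Real.exp (1 / ((k : ℝ) + 1) * n) := by
    intro k
    set c : ℝ := 1 / ((k : ℝ) + 1) with hc
    have hc0 : (0:ℝ) < c := by positivity
    obtain ⟨N0, hN0⟩ : ∃ N0 : ℕ, max R0 1 ≤ c * N0 := by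
      obtain ⟨N, hN⟩ := exists_nat_ge (max R0 1 / c)
      exact ⟨N, by rw [div_le_iff₀ hc0] at hN; linarith [hN]⟩
    set f : ℕ → ℝ := fun n => Cd' * (n : ℝ) ^ m * (Ct' * (c * n) ^ (-ρ)) with hf
    have hf0 : ∀ n, 0 ≤ f n := by
      intro n
      have : (0:ℝ) ≤ (c * n) ^ (-ρ) := Real.rpow_nonneg (by positivity) _
      positivity
    have hfs : Summable f := by
      have hsum : Summable (fun n : ℕ => (Cd' * Ct' * c ^ (-ρ)) * (n : ℝ) ^ ((m : ℝ) - ρ)) :=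
        (Real.summable_nat_rpow.mpr hmρ).mul_left _
      refine hsum.congr fun n => ?_
      rcases Nat.eq_zero_or_pos n with h0 | h0
      · subst h0
        have hne1 : -ρ ≠ 0 := neg_ne_zero.mpr hρ0.ne'
        have hne2 : (m:ℝ) - ρ ≠ 0 := by linarith
        simp [hf, Real.zero_rpow hne1, Real.zero_rpow hne2]
      · have hn0 : (0:ℝ) < n := by exact_mod_cast h0
        simp only [hf]
        rw [Real.mul_rpow hc0.le (le_of_lt hn0)]
        rw [show ((m : ℝ) - ρ) = (m : ℝ) + (-ρ) by ring, Real.rpow_add hn0,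
          Real.rpow_natCast]
        ring
    set s : ℕ → Set Ω := fun n =>
      ⋃ j : Fin (d n), {ω | Real.exp (c * n) < ‖a ⟨n, j⟩ ω‖} with hs
    have hbound : ∀ n ≥ N0, P (s n) ≤ ENNReal.ofReal (f n) := by
      intro n hn
      have hcn : max R0 1 ≤ c * n := by
        refine le_trans hN0 (mul_le_mul_of_nonneg_left ?_ hc0.le)
        exact_mod_cast hn
      have hterm : ∀ j : Fin (d n),
          P {ω | Real.exp (c * n) < ‖a ⟨n, j⟩ ω‖} ≤
            ENNReal.ofReal (Ct' * (c * n) ^ (-ρ)) := by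
        intro j
        have hsetm : MeasurableSet {z : ℂ | Real.exp (c * n) < ‖z‖} :=
          measurableSet_lt measurable_const measurable_norm
        have h1 : {ω | Real.exp (c * n) < ‖a ⟨n, j⟩ ω‖} =
            a ⟨n, j⟩ ⁻¹' {z : ℂ | Real.exp (c * n) < ‖z‖} := rfl
        rw [h1, ← Measure.map_apply (hmeas _) hsetm, hlaw]
        refine le_trans (measure_mono ?_) (le_trans (htail (c * n)
          (le_trans (le_max_left _ _) hcn)) ?_)
        · intro z hz
          exact (Real.lt_log_iff_exp_lt (lt_trans (Real.exp_pos _) hz)).mpr hz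
        · exact ENNReal.ofReal_le_ofReal
            (mul_le_mul_of_nonneg_right (le_max_left _ _)
              (Real.rpow_nonneg (by positivity) _))
      calc P (s n) ≤ ∑' (j : Fin (d n)), P {ω | Real.exp (c * n) < ‖a ⟨n, j⟩ ω‖} :=
            measure_iUnion_le _
        _ ≤ ∑' (_ : Fin (d n)), ENNReal.ofReal (Ct' * (c * n) ^ (-ρ)) :=
            ENNReal.tsum_le_tsum hterm
        _ = (d n : ℝ≥0∞) * ENNReal.ofReal (Ct' * (c * n) ^ (-ρ)) := by
            rw [tsum_fintype]
            simp [Finset.sum_const, Finset.card_univ, nsmul_eq_mul]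
        _ ≤ ENNReal.ofReal (f n) := by
            rw [← ENNReal.ofReal_natCast (d n), ← ENNReal.ofReal_mul (by positivity)]
            refine ENNReal.ofReal_le_ofReal ?_
            simp only [hf]
            refine mul_le_mul_of_nonneg_right (hd' n) ?_
            exact mul_nonneg hCt'0 (Real.rpow_nonneg (by positivity) _)
    have := bc_helper P s f hf0 hfs N0 hbound
    filter_upwards [this] with ω hω
    filter_upwards [hω] with n hn j
    by_contra hcontra
    exact hn (Set.mem_iUnion.mpr ⟨j, not_le.mp hcontra⟩)
  -- lower-tail a.s. eventual bound, for each k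
  have keyL : ∀ k : ℕ, ∀ᵐ ω ∂P, ∀ᶠ n in atTop, ∀ j : Fin (d n),
      Real.exp (-(1 / ((k : ℝ) + 1) * n)) ≤ ‖a ⟨n, j⟩ ω‖ := by
    intro k
    set c : ℝ := 1 / ((k : ℝ) + 1) with hc
    have hc0 : (0:ℝ) < c := by positivity
    set f : ℕ → ℝ := fun n =>
      Cd' * (n : ℝ) ^ m * (C * (Real.pi * Real.exp (-(c * n)) ^ 2)) with hf
    have hf0 : ∀ n, 0 ≤ f n := by
      intro n; have := Real.pi_pos; positivity
    have hfs : Summable f := by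
      have hsum : Summable (fun n : ℕ =>
          (Cd' * C * Real.pi) * ((n : ℝ) ^ m * Real.exp (-(2 * c)) ^ n)) := by
        refine Summable.mul_left _ ?_
        refine summable_pow_mul_geometric_of_norm_lt_one m ?_
        rw [Real.norm_eq_abs, abs_of_pos (Real.exp_pos _)]
        exact Real.exp_lt_one_iff.mpr (by linarith)
      refine hsum.congr fun n => ?_
      have hexp : Real.exp (-(2 * c)) ^ n = Real.exp (-(c * n)) ^ 2 := by
        rw [← Real.exp_nat_mul, ← Real.exp_nat_mul]
        congr 1; push_cast; ring
      simp only [hf]; rw [hexp]; ring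
    set s : ℕ → Set Ω := fun n =>
      ⋃ j : Fin (d n), {ω | ‖a ⟨n, j⟩ ω‖ < Real.exp (-(c * n))} with hs
    have hbound : ∀ n ≥ 0, P (s n) ≤ ENNReal.ofReal (f n) := by
      intro n _
      set r : ℝ := Real.exp (-(c * n)) with hr
      have hr0 : 0 < r := Real.exp_pos _
      have hterm : ∀ j : Fin (d n),
          P {ω | ‖a ⟨n, j⟩ ω‖ < r} ≤ ENNReal.ofReal (C * (Real.pi * r ^ 2)) := by
        intro j
        have hball : {z : ℂ | ‖z‖ < r} = Metric.ball 0 r := by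
          ext z; simp [Metric.mem_ball, dist_zero_right]
        have hsetm : MeasurableSet {z : ℂ | ‖z‖ < r} := by
          rw [hball]; exact measurableSet_ball
        have h1 : {ω | ‖a ⟨n, j⟩ ω‖ < r} = a ⟨n, j⟩ ⁻¹' {z : ℂ | ‖z‖ < r} := rfl
        rw [h1, ← Measure.map_apply (hmeas _) hsetm, hlaw, hμd, hball,
          withDensity_apply _ measurableSet_ball]
        calc ∫⁻ z in Metric.ball 0 r, ENNReal.ofReal (φd z) ∂volume
            ≤ ∫⁻ _z in Metric.ball 0 r, ENNReal.ofReal C ∂volume :=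
              lintegral_mono fun z => ENNReal.ofReal_le_ofReal (hφd z).2
          _ = ENNReal.ofReal C * volume (Metric.ball (0:ℂ) r) := by
              rw [setLIntegral_const]
          _ = ENNReal.ofReal C * ENNReal.ofReal (Real.pi * r ^ 2) := by
              rw [Complex.volume_ball, ENNReal.ofReal_mul Real.pi_pos.le,
                ENNReal.ofReal_pow hr0.le, mul_comm (ENNReal.ofReal Real.pi)]
              rw [← NNReal.coe_real_pi, ENNReal.ofReal_coe_nnreal]
          _ = ENNReal.ofReal (C * (Real.pi * r ^ 2)) := by
              rw [ENNReal.ofReal_mul hC0]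
      calc P (s n) ≤ ∑' (j : Fin (d n)), P {ω | ‖a ⟨n, j⟩ ω‖ < r} := measure_iUnion_le _
        _ ≤ ∑' (_ : Fin (d n)), ENNReal.ofReal (C * (Real.pi * r ^ 2)) :=
            ENNReal.tsum_le_tsum hterm
        _ = (d n : ℝ≥0∞) * ENNReal.ofReal (C * (Real.pi * r ^ 2)) := by
            rw [tsum_fintype]
            simp [Finset.sum_const, Finset.card_univ, nsmul_eq_mul]
        _ ≤ ENNReal.ofReal (f n) := by
            rw [← ENNReal.ofReal_natCast (d n), ← ENNReal.ofReal_mul (by positivity)]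
            refine ENNReal.ofReal_le_ofReal ?_
            simp only [hf]
            refine mul_le_mul_of_nonneg_right (hd' n) ?_
            have := Real.pi_pos; positivity
    have := bc_helper P s f hf0 hfs 0 hbound
    filter_upwards [this] with ω hω
    filter_upwards [hω] with n hn j
    by_contra hcontra
    exact hn (Set.mem_iUnion.mpr ⟨j, not_le.mp hcontra⟩)
  -- combine over k
  have keyA : ∀ᵐ ω ∂P, ∀ k : ℕ,
      (∀ᶠ n in atTop, ∀ j : Fin (d n), ‖a ⟨n, j⟩ ω‖ ≤ Real.exp (1 / ((k : ℝ) + 1) * n)) ∧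
      (∀ᶠ n in atTop, ∀ j : Fin (d n), Real.exp (-(1 / ((k : ℝ) + 1) * n)) ≤ ‖a ⟨n, j⟩ ω‖) := by
    rw [ae_all_iff]
    intro k
    filter_upwards [keyU k, keyL k] with ω h1 h2
    exact ⟨h1, h2⟩
  -- the deterministic part
  filter_upwards [keyA] with ω hω
  -- auxiliary limit : (log Cd' + m log n)/(2n) → 0
  have hlog : Tendsto (fun n : ℕ => (Real.log Cd' + m * Real.log n) / (2 * n))
      atTop (nhds 0) := by
    have t1 : Tendsto (fun n : ℕ => Real.log Cd' / (2 * n)) atTop (nhds 0) := by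
      apply Tendsto.div_atTop tendsto_const_nhds
      exact Tendsto.const_mul_atTop two_pos tendsto_natCast_atTop_atTop
    have tlog : Tendsto (fun x : ℝ => Real.log x / x) atTop (nhds 0) :=
      Real.isLittleO_log_id_atTop.tendsto_div_nhds_zero
    have t2' : Tendsto (fun n : ℕ => Real.log n / n) atTop (nhds 0) :=
      tlog.comp tendsto_natCast_atTop_atTop
    have t2 : Tendsto (fun n : ℕ => (m : ℝ) * Real.log n / (2 * n)) atTop (nhds 0) := by
      have := (t2'.const_mul ((m : ℝ) / 2))
      rw [mul_zero] at this
      refine this.congr fun n => ?_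
      field_simp
    have := t1.add t2
    rw [add_zero] at this
    refine this.congr fun n => ?_
    rw [← add_div]
  rw [NormedAddCommGroup.tendsto_nhds_zero]
  intro δ hδ
  obtain ⟨k, hk⟩ := exists_nat_one_div_lt (half_pos hδ)
  set c : ℝ := 1 / ((k : ℝ) + 1) with hc
  have hc0 : (0:ℝ) < c := by positivity
  obtain ⟨hU, hL⟩ := hω k
  have h3 : ∀ᶠ n : ℕ in atTop, (Real.log Cd' + m * Real.log n) / (2 * n) < δ / 2 :=
    hlog.eventually_lt_const (half_pos hδ)
  filter_upwards [hU, hL, h3, eventually_ge_atTop 1] with n hUn hLn h3n hn1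
  have hn0 : (0:ℝ) < n := by exact_mod_cast hn1
  rcases Nat.eq_zero_or_pos (d n) with h0 | h0
  · haveI : IsEmpty (Fin (d n)) := by rw [h0]; infer_instance
    simp [Real.sqrt_zero, Real.log_zero, hδ]
  · set S : ℝ := ∑ j : Fin (d n), ‖a ⟨n, j⟩ ω‖ ^ 2 with hS
    have hSl : Real.exp (-(c * n)) ^ 2 ≤ S := by
      refine le_trans (pow_le_pow_left₀ (Real.exp_pos _).le (hLn (⟨0, h0⟩ : Fin (d n))) 2) ?_
      exact Finset.single_le_sum (f := fun j : Fin (d n) => ‖a ⟨n, j⟩ ω‖ ^ 2)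
        (fun i _ => by positivity) (Finset.mem_univ (⟨0, h0⟩ : Fin (d n)))
    have hS0 : 0 < S := lt_of_lt_of_le (by positivity) hSl
    have hSu : S ≤ (d n : ℝ) * Real.exp (c * n) ^ 2 := by
      calc S ≤ ∑ _j : Fin (d n), Real.exp (c * n) ^ 2 :=
            Finset.sum_le_sum fun j _ => pow_le_pow_left₀ (norm_nonneg _) (hUn j) 2
        _ = (d n : ℝ) * Real.exp (c * n) ^ 2 := by
            simp [Finset.sum_const, Finset.card_univ, nsmul_eq_mul]
    have hdn0 : (0:ℝ) < (d n : ℝ) := by exact_mod_cast h0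
    have hlogl : -(2 * (c * n)) ≤ Real.log S := by
      have := Real.log_le_log (by positivity) hSl
      rw [Real.log_pow, Real.log_exp] at this
      push_cast at this
      linarith
    have hlogu : Real.log S ≤ Real.log Cd' + m * Real.log n + 2 * (c * n) := by
      have h1 : Real.log S ≤ Real.log ((d n : ℝ) * Real.exp (c * n) ^ 2) :=
        Real.log_le_log hS0 hSu
      rw [Real.log_mul (ne_of_gt hdn0) (by positivity), Real.log_pow, Real.log_exp] at h1
      have h2 : Real.log (d n : ℝ) ≤ Real.log (Cd' * (n : ℝ) ^ m) :=
        Real.log_le_log hdn0 (hd' n)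
      rw [Real.log_mul (ne_of_gt hCd'0) (by positivity), Real.log_pow] at h2
      push_cast at h1 ⊢
      linarith
    -- now bound the term
    rw [Real.log_sqrt hS0.le]
    have hexpr : (1 / (n : ℝ)) * (Real.log S / 2) = Real.log S / (2 * n) := by
      ring
    rw [hexpr, Real.norm_eq_abs, abs_lt]
    constructor
    · have hlb : -(2 * (c * n)) / (2 * n) ≤ Real.log S / (2 * n) := by
        gcongr
      have heq : -(2 * (c * n)) / (2 * n) = -c := by
        field_simp
      rw [heq] at hlb
      have : c < δ := lt_trans hk (by linarith)
      linarith
    · have hub : Real.log S / (2 * n) ≤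
          (Real.log Cd' + m * Real.log n + 2 * (c * n)) / (2 * n) := by
        gcongr
      have heq : (Real.log Cd' + m * Real.log n + 2 * (c * n)) / (2 * n) =
          (Real.log Cd' + m * Real.log n) / (2 * n) + c := by
        field_simp
      rw [heq] at hub
      have : c < δ / 2 := hk
      linarith
end

section
/- Let u ∈ ℂ^d be a unit vector, and let a ∈ ℂ^d have i.i.d. coordinates with common law P satisfying P{z : log|z| > R} ≤ C R^{-ρ} for large R, with ρ > 1. Then for every T > 0 large enough, the integral of log|⟨a,u⟩| over the event {log|⟨a,u⟩| > T} is at most C'·d·T^{1-ρ} for a constant C' depending only on C and ρ. -/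
/-!
STATEMENT 4 (upper-tail estimate for log|⟨a,u⟩|):
Let u ∈ ℂ^d be a unit vector and a ∈ ℂ^d have i.i.d. coordinates with common law μ
satisfying μ{z : log|z| > R} ≤ C·R^{-ρ} for large R, ρ > 1.  Then for all large
enough T > 0,
  ∫_{log|⟨a,u⟩| > T} log|⟨a,u⟩| dP_n ≤ C'·d·T^{1-ρ},
where C' depends only on C and ρ (hence the quantifier order below).
-/

open MeasureTheory Real

lemma pi_eval_preimage {d : ℕ} (μ : Measure ℂ) [IsProbabilityMeasure μ] (j : Fin d)
    {B : Set ℂ} (hB : MeasurableSet B) :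
    (Measure.pi fun _ : Fin d => μ) ((fun a => a j) ⁻¹' B) = μ B := by
  have h : (fun a : Fin d → ℂ => a j) ⁻¹' B
      = Set.pi Set.univ (fun i => if i = j then B else Set.univ) := by
    ext a
    simp only [Set.mem_preimage, Set.mem_pi, Set.mem_univ, forall_true_left]
    constructor
    · intro h i
      by_cases hij : i = j <;> simp [hij, h]
    · intro h
      simpa using h j
  rw [h, Measure.pi_pi]
  simp [apply_ite μ, Finset.prod_ite_eq']

theorem stmt_4 (C ρ : ℝ) (hC : 0 < C) (hρ : 1 < ρ) :
    ∃ C' > (0 : ℝ), ∀ (d : ℕ), 0 < d →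
      ∀ (μ : Measure ℂ), IsProbabilityMeasure μ →
      ∀ R0 : ℝ,
        (∀ R ≥ R0, μ {z : ℂ | R < Real.log ‖z‖} ≤ ENNReal.ofReal (C * R ^ (-ρ))) →
      ∀ u : Fin d → ℂ, (∑ j, ‖u j‖ ^ 2) = 1 →
      ∃ T0 : ℝ, 0 < T0 ∧ ∀ T ≥ T0,
        (∫ a in {a : Fin d → ℂ | T < Real.log ‖∑ j, a j * u j‖},
            Real.log ‖∑ j, a j * u j‖ ∂(Measure.pi fun _ : Fin d => μ))
          ≤ C' * d * T ^ (1 - ρ) := by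
  classical
  set r : ℝ := 2 * (2:ℝ) ^ (-ρ) with hr_def
  have hr0 : 0 < r := by positivity
  have hr1 : r < 1 := by
    have h2 : (2:ℝ) ^ (-ρ) < (2:ℝ) ^ (-1:ℝ) :=
      Real.rpow_lt_rpow_of_exponent_lt one_lt_two (by linarith)
    rw [Real.rpow_neg_one] at h2
    rw [hr_def]; linarith
  have h1r : 0 < 1 - r := by linarith
  have hC'pos : 0 < C * (2 * (2:ℝ) ^ ρ) / (1 - r) := by positivity
  refine ⟨C * (2 * (2:ℝ) ^ ρ) / (1 - r), hC'pos, ?_⟩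
  intro d hd μ hμ R0 htail u hu
  have hd' : (0:ℝ) < d := Nat.cast_pos.2 hd
  set Pm := (Measure.pi fun _ : Fin d => μ) with hPm_def
  set g : (Fin d → ℂ) → ℝ := fun a => Real.log ‖∑ j, a j * u j‖ with hg_def
  have hgm : Measurable g := by
    apply Real.measurable_log.comp
    apply measurable_norm.comp
    exact Finset.measurable_sum _ (fun j _ => (measurable_pi_apply j).mul_const _)
  set Sset : ℝ → Set (Fin d → ℂ) := fun s => {a | s < g a} with hS_def
  have hSmeas : ∀ s, MeasurableSet (Sset s) := fun s =>
    measurableSet_lt measurable_const hgm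
  set T0 : ℝ := max (max (2*R0) (2 * Real.log d)) 1 with hT0_def
  have hT01 : (1:ℝ) ≤ T0 := le_max_right _ _
  have hT0R : 2*R0 ≤ T0 := (le_max_left _ _).trans (le_max_left _ _)
  have hT0L : 2 * Real.log d ≤ T0 := (le_max_right _ _).trans (le_max_left _ _)
  refine ⟨T0, by linarith, ?_⟩
  intro T hT
  have hTpos : 0 < T := by linarith
  show (∫ a in Sset T, g a ∂Pm) ≤ C * (2 * (2:ℝ) ^ ρ) / (1 - r) * d * T ^ (1-ρ)
  -- tail bound for the pi measure
  have tail : ∀ s : ℝ, T0 ≤ s →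
      Pm (Sset s) ≤ ENNReal.ofReal ((d:ℝ) * (C * (s/2) ^ (-ρ))) := by
    intro s hs
    have hs2 : 0 < s/2 := by linarith
    have hlogd : Real.log d ≤ s/2 := by linarith
    set B : Set ℂ := {z : ℂ | s - Real.log d < Real.log ‖z‖} with hB_def
    have hBm : MeasurableSet B :=
      measurableSet_lt measurable_const (Real.measurable_log.comp measurable_norm)
    have hsub : Sset s ⊆ ⋃ j : Fin d, (fun a => a j) ⁻¹' B := by
      intro a ha
      by_contra hcon
      simp only [Set.mem_iUnion, Set.mem_preimage, hB_def, Set.mem_setOf_eq, not_exists,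
        not_lt] at hcon
      have hnorm : ‖∑ j, a j * u j‖ ≤ Real.exp s := by
        calc ‖∑ j, a j * u j‖ ≤ ∑ j, ‖a j * u j‖ := norm_sum_le _ _
          _ ≤ ∑ _j : Fin d, Real.exp (s - Real.log d) := by
              apply Finset.sum_le_sum
              intro j _
              rw [norm_mul]
              have h1 : ‖a j‖ ≤ Real.exp (s - Real.log d) :=
                le_trans (Real.le_exp_log _) (Real.exp_le_exp.2 (hcon j))
              have h2 : ‖u j‖ ≤ 1 := by
                have hle := Finset.single_le_sum (f := fun j => ‖u j‖^2)
                  (fun i _ => sq_nonneg _) (Finset.mem_univ j)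
                rw [hu] at hle
                have hle' : ‖u j‖^2 ≤ 1 := hle
                nlinarith [norm_nonneg (u j), hle']
              calc ‖a j‖ * ‖u j‖ ≤ ‖a j‖ := mul_le_of_le_one_right (norm_nonneg _) h2
                _ ≤ _ := h1
          _ = (d:ℝ) * Real.exp (s - Real.log d) := by
              simp [Finset.sum_const, Finset.card_univ, nsmul_eq_mul]
          _ = Real.exp s := by
              rw [Real.exp_sub, Real.exp_log hd']
              field_simp
      have hles : g a ≤ s := by
        rcases eq_or_lt_of_le (norm_nonneg (∑ j, a j * u j)) with h0 | h0
        · simp only [hg_def, ← h0, Real.log_zero]; linarith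
        · calc g a ≤ Real.log (Real.exp s) := Real.log_le_log h0 hnorm
            _ = s := Real.log_exp s
      have : s < g a := ha
      linarith
    calc Pm (Sset s) ≤ Pm (⋃ j : Fin d, (fun a => a j) ⁻¹' B) := measure_mono hsub
      _ ≤ ∑' j : Fin d, Pm ((fun a => a j) ⁻¹' B) := measure_iUnion_le _
      _ = ∑ j : Fin d, Pm ((fun a => a j) ⁻¹' B) := tsum_fintype _
      _ = ∑ _j : Fin d, μ B := by
          refine Finset.sum_congr rfl fun j _ => ?_
          exact pi_eval_preimage μ j hBm
      _ = (d : ENNReal) * μ B := by simp [Finset.sum_const, Finset.card_univ]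
      _ ≤ (d : ENNReal) * ENNReal.ofReal (C * (s - Real.log d) ^ (-ρ)) := by
          gcongr
          exact htail _ (by linarith)
      _ ≤ (d : ENNReal) * ENNReal.ofReal (C * (s/2) ^ (-ρ)) := by
          have hmono : C * (s - Real.log d) ^ (-ρ) ≤ C * (s/2) ^ (-ρ) := by
            have h := Real.rpow_le_rpow_of_nonpos hs2
              (by linarith : s/2 ≤ s - Real.log d) (by linarith : -ρ ≤ 0)
            nlinarith
          exact mul_le_mul_right (ENNReal.ofReal_le_ofReal hmono) _
      _ = ENNReal.ofReal ((d:ℝ) * (C * (s/2) ^ (-ρ))) := by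
          rw [ENNReal.ofReal_mul (le_of_lt hd'), ENNReal.ofReal_natCast]
  -- dyadic decomposition
  set D : ℕ → Set (Fin d → ℂ) := fun k => Sset ((2:ℝ)^k * T) \ Sset ((2:ℝ)^(k+1) * T)
    with hD_def
  have hTk : ∀ k : ℕ, T ≤ (2:ℝ)^k * T := by
    intro k
    have h1 : (1:ℝ) ≤ 2^k := one_le_pow₀ (by norm_num)
    nlinarith
  have hcover : Sset T = ⋃ k, D k := by
    apply Set.Subset.antisymm
    · intro a ha
      have hex : ∃ n : ℕ, a ∉ Sset ((2:ℝ)^n * T) := by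
        obtain ⟨n, hn⟩ := pow_unbounded_of_one_lt (g a / T) (by norm_num : (1:ℝ) < 2)
        refine ⟨n, ?_⟩
        simp only [hS_def, Set.mem_setOf_eq, not_lt]
        calc g a = (g a / T) * T := by field_simp
          _ ≤ (2:ℝ)^n * T := by nlinarith
      set m := Nat.find hex with hm_def
      have hm : a ∉ Sset ((2:ℝ)^m * T) := Nat.find_spec hex
      have hmpos : m ≠ 0 := by
        intro h0
        apply hm
        rw [h0]
        simpa [hS_def] using ha
      obtain ⟨l, hl⟩ := Nat.exists_eq_succ_of_ne_zero hmpos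
      have hlm : a ∈ Sset ((2:ℝ)^l * T) := by
        by_contra hc
        have hfind : Nat.find hex ≤ l := Nat.find_le hc
        omega
      refine Set.mem_iUnion.2 ⟨l, hlm, ?_⟩
      rw [← Nat.succ_eq_add_one, ← hl]
      exact hm
    · intro a ha
      obtain ⟨k, hk⟩ := Set.mem_iUnion.1 ha
      have h1 : (2:ℝ)^k * T < g a := hk.1
      exact lt_of_le_of_lt (hTk k) h1
  -- per-layer bound
  set K : ℝ := 2*T*((d:ℝ)*(C*((T/2))^(-ρ))) with hK_def
  have hpow : ∀ k : ℕ, ((2:ℝ)^k)^(-ρ) = ((2:ℝ)^(-ρ))^k := by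
    intro k
    rw [← Real.rpow_natCast (2:ℝ) k, ← Real.rpow_natCast ((2:ℝ)^(-ρ)) k,
      ← Real.rpow_mul (by norm_num : (0:ℝ) ≤ 2),
      ← Real.rpow_mul (by norm_num : (0:ℝ) ≤ 2), mul_comm]
  have hterm : ∀ k : ℕ,
      (2:ℝ)^(k+1)*T * ((d:ℝ) * (C * (((2:ℝ)^k*T)/2) ^ (-ρ))) = r^k * K := by
    intro k
    have h1 : (((2:ℝ)^k*T)/2) ^ (-ρ) = ((2:ℝ)^(-ρ))^k * (T/2)^(-ρ) := by
      rw [show (2:ℝ)^k*T/2 = (2:ℝ)^k*(T/2) by ring,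
        Real.mul_rpow (by positivity) (by positivity), hpow k]
    rw [h1, hK_def, hr_def, mul_pow, pow_succ]
    ring
  have hlayer : ∀ k : ℕ,
      (∫⁻ a in D k, ENNReal.ofReal (g a) ∂Pm) ≤ ENNReal.ofReal (r^k * K) := by
    intro k
    have hb : ∀ a ∈ D k, ENNReal.ofReal (g a) ≤ ENNReal.ofReal ((2:ℝ)^(k+1)*T) := by
      intro a ha
      apply ENNReal.ofReal_le_ofReal
      have := ha.2
      simp only [hS_def, Set.mem_setOf_eq, not_lt] at this
      exact this
    calc (∫⁻ a in D k, ENNReal.ofReal (g a) ∂Pm)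
        ≤ ∫⁻ _a in D k, ENNReal.ofReal ((2:ℝ)^(k+1)*T) ∂Pm :=
          setLIntegral_mono measurable_const hb
      _ = ENNReal.ofReal ((2:ℝ)^(k+1)*T) * Pm (D k) := setLIntegral_const _ _
      _ ≤ ENNReal.ofReal ((2:ℝ)^(k+1)*T) *
          ENNReal.ofReal ((d:ℝ) * (C * (((2:ℝ)^k*T)/2) ^ (-ρ))) := by
          gcongr
          refine le_trans (measure_mono Set.diff_subset) ?_
          exact tail _ (le_trans hT (hTk k))
      _ = ENNReal.ofReal ((2:ℝ)^(k+1)*T * ((d:ℝ) * (C * (((2:ℝ)^k*T)/2) ^ (-ρ)))) := by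
          rw [← ENNReal.ofReal_mul (by positivity)]
      _ = ENNReal.ofReal (r^k * K) := by rw [hterm k]
  -- sum the layers
  have hsum : (∑' k : ℕ, ENNReal.ofReal (r^k * K)) = ENNReal.ofReal ((1-r)⁻¹ * K) := by
    have h1 : ∀ k : ℕ, ENNReal.ofReal (r^k * K)
        = (ENNReal.ofReal r)^k * ENNReal.ofReal K := by
      intro k
      rw [ENNReal.ofReal_mul (by positivity), ENNReal.ofReal_pow hr0.le]
    simp_rw [h1]
    rw [ENNReal.tsum_mul_right, ENNReal.tsum_geometric]
    have h2 : (1:ENNReal) - ENNReal.ofReal r = ENNReal.ofReal (1-r) := by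
      rw [ENNReal.ofReal_sub _ hr0.le, ENNReal.ofReal_one]
    rw [h2, ← ENNReal.ofReal_inv_of_pos h1r, ← ENNReal.ofReal_mul (by positivity)]
  -- identify the constant
  have hfinal : (1-r)⁻¹ * K = C * (2 * (2:ℝ) ^ ρ) / (1 - r) * d * T ^ (1-ρ) := by
    have h2 : ((T/2):ℝ)^(-ρ) = T^(-ρ) * (2:ℝ)^ρ := by
      rw [Real.div_rpow hTpos.le (by norm_num : (0:ℝ) ≤ 2), div_eq_mul_inv,
        ← Real.rpow_neg (by norm_num : (0:ℝ) ≤ 2) (-ρ), neg_neg]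
    have h3 : T^(1-ρ) = T * T^(-ρ) := by
      rw [show (1-ρ) = 1 + (-ρ) by ring, Real.rpow_add hTpos, Real.rpow_one]
    rw [hK_def, h2, h3]
    field_simp
  -- conclude
  have hlin : (∫⁻ a in Sset T, ENNReal.ofReal (g a) ∂Pm)
      ≤ ENNReal.ofReal (C * (2 * (2:ℝ) ^ ρ) / (1 - r) * d * T ^ (1-ρ)) := by
    calc (∫⁻ a in Sset T, ENNReal.ofReal (g a) ∂Pm)
        = ∫⁻ a in ⋃ k, D k, ENNReal.ofReal (g a) ∂Pm := by rw [hcover]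
      _ ≤ ∑' k : ℕ, ∫⁻ a in D k, ENNReal.ofReal (g a) ∂Pm := lintegral_iUnion_le _ _
      _ ≤ ∑' k : ℕ, ENNReal.ofReal (r^k * K) := ENNReal.tsum_le_tsum hlayer
      _ = ENNReal.ofReal ((1-r)⁻¹ * K) := hsum
      _ = ENNReal.ofReal (C * (2 * (2:ℝ) ^ ρ) / (1 - r) * d * T ^ (1-ρ)) := by
          rw [hfinal]
  have hnn : 0 ≤ᵐ[Pm.restrict (Sset T)] g := by
    refine (ae_restrict_iff' (hSmeas T)).2 (ae_of_all _ ?_)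
    intro a ha
    have h1 : T < g a := ha
    simp only [Pi.zero_apply]
    linarith
  have heq : (∫ a in Sset T, g a ∂Pm)
      = (∫⁻ a in Sset T, ENNReal.ofReal (g a) ∂Pm).toReal :=
    integral_eq_lintegral_of_nonneg_ae hnn (hgm.aestronglyMeasurable.restrict)
  calc (∫ a in Sset T, g a ∂Pm)
      = (∫⁻ a in Sset T, ENNReal.ofReal (g a) ∂Pm).toReal := heq
    _ ≤ C * (2 * (2:ℝ) ^ ρ) / (1 - r) * d * T ^ (1-ρ) :=
        ENNReal.toReal_le_of_le_ofReal (by positivity) hlin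
end

section
/- Let X_n be a sequence of independent, uniformly bounded, nonpositive real random variables with E[X_n] → 0. Then almost surely there exists a subsequence of indices (n_j) of relative density one along which X_{n_j} → 0. -/
open MeasureTheory Filter ProbabilityTheory Finset

lemma det_density_one (b : ℕ → ℝ) (hneg : ∀ n, b n ≤ 0)
    (hces : Tendsto (fun n : ℕ => (∑ k ∈ Finset.range n, b k) / n) atTop (nhds 0)) :
    ∃ n : ℕ → ℕ, StrictMono n ∧ (∀ j, 1 ≤ n j) ∧
      Tendsto (fun j : ℕ => (j : ℝ) / (n j : ℝ)) atTop (nhds 1) ∧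
      Tendsto (fun j : ℕ => b (n j)) atTop (nhds 0) := by
  classical
  set c : ℕ → ℝ := fun n => ∑ k ∈ Finset.range n, (-b k) with hcdef
  have hc0 : ∀ n, 0 ≤ c n := fun n => Finset.sum_nonneg fun k _ => neg_nonneg.2 (hneg k)
  have hcn : Tendsto (fun n : ℕ => c n / n) atTop (nhds 0) := by
    have := hces.neg
    simp only [neg_zero, ← neg_div, ← Finset.sum_neg_distrib] at this
    exact this
  -- choose thresholds N m
  have hN : ∀ m : ℕ, ∃ N : ℕ, m < N ∧ ∀ n, N ≤ n → c n ≤ n * ((1/2)^m / (m+1)) := by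
    intro m
    have hpos : (0:ℝ) < (1/2)^m / (m+1) := by positivity
    obtain ⟨N0, hN0⟩ := (eventually_atTop).1 (hcn.eventually (gt_mem_nhds hpos))
    refine ⟨max (m+1) (N0+1), lt_of_lt_of_le (Nat.lt_succ_self m) (le_max_left _ _), ?_⟩
    intro n hn
    have hn1 : 1 ≤ n := le_trans (le_trans (Nat.succ_le_succ (Nat.zero_le m)) (le_max_left _ _)) hn
    have hnpos : (0:ℝ) < n := by exact_mod_cast hn1
    have h2 := hN0 n (le_trans (le_trans (Nat.le_succ N0) (le_max_right _ _)) hn)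
    have h3 : c n / n ≤ (1/2)^m / (m+1) := le_of_lt h2
    calc c n = (c n / n) * n := by field_simp
    _ ≤ ((1/2)^m/(m+1)) * n := mul_le_mul_of_nonneg_right h3 hnpos.le
    _ = n * ((1/2)^m/(m+1)) := mul_comm _ _
  choose N hNlt hNbound using hN
  set p : ℕ → Prop := fun k => 1 ≤ k ∧ ∀ m, N m ≤ k → -b k ≤ 1/(m+1) with hpdef
  -- counting the bad set
  set Dc : ℕ → ℕ := fun n => ((Finset.range n).filter fun k => ¬ p k).card with hDdef
  have key : ∀ J n : ℕ, (Dc n : ℝ) ≤ N J + n * ((1/2)^J * 2) := by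
    intro J n
    have hsub : (Finset.range n).filter (fun k => ¬ p k) ⊆
        Finset.range (N J) ∪ (Finset.Ico J n).biUnion
          (fun m => (Finset.range n).filter fun k => N m ≤ k ∧ 1/(m+1) < -b k) := by
      intro k hk
      simp only [Finset.mem_filter, Finset.mem_range] at hk
      obtain ⟨hkn, hknp⟩ := hk
      rcases lt_or_ge k (N J) with h | h
      · exact Finset.mem_union_left _ (Finset.mem_range.2 h)
      · refine Finset.mem_union_right _ ?_
        have hk1 : 1 ≤ k := by have := hNlt J; omega
        have hknp2 : ∃ m : ℕ, N m ≤ k ∧ 1/((m:ℝ)+1) < -b k := by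
          by_contra hcon
          push_neg at hcon
          exact hknp ⟨hk1, hcon⟩
        obtain ⟨m, hm1, hm2⟩ := hknp2
        rcases le_or_gt J m with hJm | hJm
        · refine Finset.mem_biUnion.2 ⟨m, ?_, ?_⟩
          · exact Finset.mem_Ico.2 ⟨hJm, lt_of_le_of_lt (le_trans (le_of_lt (hNlt m)) hm1) hkn⟩
          · exact Finset.mem_filter.2 ⟨Finset.mem_range.2 hkn, hm1, hm2⟩
        · refine Finset.mem_biUnion.2 ⟨J, ?_, ?_⟩
          · exact Finset.mem_Ico.2 ⟨le_refl J, lt_of_le_of_lt (le_trans (le_of_lt (hNlt J)) h) hkn⟩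
          · refine Finset.mem_filter.2 ⟨Finset.mem_range.2 hkn, h, lt_of_le_of_lt ?_ hm2⟩
            have : (m:ℝ)+1 ≤ (J:ℝ)+1 := by exact_mod_cast Nat.succ_le_succ hJm.le
            exact one_div_le_one_div_of_le (by positivity) this
    have hcard : (Dc n : ℕ) ≤ N J + ∑ m ∈ Finset.Ico J n,
        ((Finset.range n).filter fun k => N m ≤ k ∧ 1/(m+1) < -b k).card := by
      calc Dc n ≤ (Finset.range (N J) ∪ (Finset.Ico J n).biUnion
          (fun m => (Finset.range n).filter fun k => N m ≤ k ∧ 1/(m+1) < -b k)).card :=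
        Finset.card_le_card hsub
      _ ≤ (Finset.range (N J)).card + ((Finset.Ico J n).biUnion
          (fun m => (Finset.range n).filter fun k => N m ≤ k ∧ 1/(m+1) < -b k)).card :=
        Finset.card_union_le _ _
      _ ≤ N J + ∑ m ∈ Finset.Ico J n,
          ((Finset.range n).filter fun k => N m ≤ k ∧ 1/(m+1) < -b k).card := by
        rw [Finset.card_range]
        exact Nat.add_le_add_left (Finset.card_biUnion_le) _
    have hterm : ∀ m ∈ Finset.Ico J n,
        (((Finset.range n).filter fun k => N m ≤ k ∧ 1/(m+1) < -b k).card : ℝ) ≤ n * (1/2)^m := by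
      intro m _
      set F := (Finset.range n).filter fun k => N m ≤ k ∧ 1/(m+1) < -b k with hF
      rcases Finset.eq_empty_or_nonempty F with hFe | ⟨k0, hk0⟩
      · rw [hFe]; simp only [Finset.card_empty, Nat.cast_zero]; positivity
      · have hk0' := Finset.mem_filter.1 hk0
        have hNmn : N m ≤ n := le_of_lt (lt_of_le_of_lt hk0'.2.1 (Finset.mem_range.1 hk0'.1))
        have hcb := hNbound m n hNmn
        have hsum : (F.card : ℝ) * (1/(m+1)) ≤ c n := by
          calc (F.card : ℝ) * (1/(m+1)) = ∑ _k ∈ F, (1:ℝ)/(m+1) := by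
                rw [Finset.sum_const, nsmul_eq_mul]
          _ ≤ ∑ k ∈ F, (-b k) := Finset.sum_le_sum fun k hk =>
                le_of_lt (Finset.mem_filter.1 hk).2.2
          _ ≤ ∑ k ∈ Finset.range n, (-b k) := Finset.sum_le_sum_of_subset_of_nonneg
                (Finset.filter_subset _ _) (fun k _ _ => neg_nonneg.2 (hneg k))
          _ = c n := rfl
        have hm1 : (0:ℝ) < (m:ℝ)+1 := by positivity
        calc (F.card : ℝ) ≤ c n * ((m:ℝ)+1) := by
              rwa [mul_one_div, div_le_iff₀ hm1] at hsum
        _ ≤ ((n:ℝ) * ((1/2)^m/((m:ℝ)+1))) * ((m:ℝ)+1) := mul_le_mul_of_nonneg_right hcb hm1.le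
        _ = (n:ℝ) * (1/2)^m := by field_simp
    have hgeom : ∑ m ∈ Finset.Ico J n, ((n:ℝ) * (1/2)^m) ≤ n * ((1/2)^J * 2) := by
      rw [← Finset.mul_sum]
      refine mul_le_mul_of_nonneg_left ?_ (Nat.cast_nonneg n)
      rcases le_or_gt J n with h | h
      · rw [Finset.sum_Ico_eq_sum_range]
        have : ∀ i, ((1:ℝ)/2)^(J+i) = (1/2)^J * (1/2)^i := fun i => pow_add _ _ _
        simp_rw [this, ← Finset.mul_sum]
        exact mul_le_mul_of_nonneg_left (sum_geometric_two_le _) (by positivity)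
      · rw [Finset.Ico_eq_empty (by omega)]
        simp only [Finset.sum_empty]
        positivity
    calc (Dc n : ℝ) ≤ N J + ∑ m ∈ Finset.Ico J n,
        (((Finset.range n).filter fun k => N m ≤ k ∧ 1/(m+1) < -b k).card : ℝ) := by
          exact_mod_cast hcard
    _ ≤ N J + ∑ m ∈ Finset.Ico J n, ((n:ℝ) * (1/2)^m) :=
        add_le_add_right (Finset.sum_le_sum hterm) _
    _ ≤ N J + n * ((1/2)^J * 2) := add_le_add_right hgeom _
  -- density of bad set tends to zero
  have hD : Tendsto (fun n : ℕ => (Dc n : ℝ)/n) atTop (nhds 0) := by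
    rw [Metric.tendsto_atTop]
    intro ε hε
    obtain ⟨J, hJ⟩ := exists_pow_lt_of_lt_one (show (0:ℝ) < ε/4 by linarith)
      (show (1:ℝ)/2 < 1 by norm_num)
    have h1 : Tendsto (fun n : ℕ => (N J : ℝ)/n) atTop (nhds 0) :=
      tendsto_const_div_atTop_nhds_zero_nat _
    obtain ⟨N1, hN1⟩ := (eventually_atTop).1 (h1.eventually (gt_mem_nhds (show (0:ℝ) < ε/2 by linarith)))
    refine ⟨max N1 1, fun n hn => ?_⟩
    have hn1 : 1 ≤ n := le_trans (le_max_right _ _) hn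
    have hnpos : (0:ℝ) < n := by exact_mod_cast hn1
    rw [Real.dist_eq, sub_zero, abs_of_nonneg (by positivity)]
    have hkey := key J n
    have : (Dc n : ℝ)/n ≤ (N J : ℝ)/n + (1/2)^J * 2 := by
      calc (Dc n : ℝ)/n ≤ ((N J : ℝ) + n * ((1/2)^J * 2))/n := by gcongr
      _ = (N J : ℝ)/n + (1/2)^J * 2 := by
          rw [add_div, mul_comm, mul_div_assoc, div_self hnpos.ne', mul_one]
    have h2 := hN1 n (le_trans (le_max_left _ _) hn)
    calc (Dc n : ℝ)/n ≤ (N J : ℝ)/n + (1/2)^J * 2 := this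
    _ < ε/2 + ε/2 := by
        have : ((1:ℝ)/2)^J * 2 < ε/2 := by linarith [hJ]
        linarith [h2]
    _ = ε := by ring
  -- density of p tends to one
  have hcount : ∀ n : ℕ, (Nat.count p n : ℝ) = n - Dc n := by
    intro n
    have := Finset.card_filter_add_card_filter_not (s := Finset.range n) p
    rw [Finset.card_range] at this
    have h2 : (((Finset.range n).filter p).card : ℝ) + (Dc n : ℝ) = n := by exact_mod_cast this
    rw [Nat.count_eq_card_filter_range]
    · linarith
  have h1 : Tendsto (fun n : ℕ => (Nat.count p n : ℝ)/n) atTop (nhds 1) := by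
    have h0 : Tendsto (fun n : ℕ => 1 - (Dc n : ℝ)/n) atTop (nhds 1) := by
      have := (tendsto_const_nhds (x := (1:ℝ)) (f := atTop)).sub hD
      rw [sub_zero] at this
      exact this
    refine h0.congr' ?_
    filter_upwards [eventually_ge_atTop 1] with n hn
    have hnpos : (0:ℝ) < n := by exact_mod_cast hn
    rw [hcount n, sub_div, div_self hnpos.ne']
  -- p is infinite
  have hinf : (setOf p).Infinite := by
    by_contra h
    rw [Set.not_infinite] at h
    have hb : ∀ n, Nat.count p n ≤ h.toFinset.card := by
      intro n
      rw [Nat.count_eq_card_filter_range]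
      have : ((Finset.range n).filter p) ⊆ h.toFinset := by
        intro k hk
        simp only [Set.Finite.mem_toFinset, Set.mem_setOf_eq]
        exact (Finset.mem_filter.1 hk).2
      exact Finset.card_le_card this
    have h2 : Tendsto (fun n : ℕ => ((h.toFinset.card : ℝ))/n) atTop (nhds 0) :=
      tendsto_const_div_atTop_nhds_zero_nat _
    have h3 : (1:ℝ) ≤ 0 := by
      refine le_of_tendsto_of_tendsto h1 h2 ?_
      filter_upwards [eventually_ge_atTop 1] with n hn
      have hnpos : (0:ℝ) < n := by exact_mod_cast hn
      gcongr
      exact hb n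
    linarith
  -- build the subsequence
  refine ⟨Nat.nth p, Nat.nth_strictMono hinf, ?_, ?_, ?_⟩
  · intro j
    exact (Nat.nth_mem_of_infinite hinf j).1
  · have he : Tendsto (Nat.nth p) atTop atTop := (Nat.nth_strictMono hinf).tendsto_atTop
    have := h1.comp he
    refine this.congr fun j => ?_
    simp only [Function.comp_apply, Nat.count_nth_of_infinite hinf]
  · rw [Metric.tendsto_atTop]
    intro ε hε
    obtain ⟨m, hm⟩ := exists_nat_one_div_lt hε
    have he : Tendsto (Nat.nth p) atTop atTop := (Nat.nth_strictMono hinf).tendsto_atTop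
    obtain ⟨J, hJ⟩ := (eventually_atTop).1 (he.eventually (eventually_ge_atTop (N m)))
    refine ⟨J, fun j hj => ?_⟩
    have hp := Nat.nth_mem_of_infinite hinf j
    have h2 := hp.2 m (hJ j hj)
    rw [Real.dist_eq, sub_zero, abs_of_nonpos (hneg _)]
    calc -b (Nat.nth p j) ≤ 1/(m+1) := h2
    _ < ε := by exact_mod_cast hm


lemma slln_aux {Ω : Type*} [MeasurableSpace Ω] (P : Measure Ω) [IsProbabilityMeasure P]
    (X : ℕ → Ω → ℝ) (hmeas : ∀ n, Measurable (X n))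
    (hindep : iIndepFun X P)
    (M : ℝ) (hbd : ∀ n ω, |X n ω| ≤ M)
    (hneg : ∀ n ω, X n ω ≤ 0)
    (hmean : Tendsto (fun n : ℕ => ∫ ω, X n ω ∂P) atTop (nhds 0)) :
    ∀ᵐ ω ∂P, Tendsto (fun n : ℕ => (∑ k ∈ Finset.range n, X k ω) / n) atTop (nhds 0) := by
  rcases isEmpty_or_nonempty Ω with hΩ | hΩ
  · exact Filter.Eventually.of_forall fun ω => (IsEmpty.false ω).elim
  have hM : 0 ≤ M := (abs_nonneg _).trans (hbd 0 (Classical.arbitrary Ω))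
  -- L² membership
  have hL2 : ∀ n, MemLp (X n) 2 P := fun n =>
    (memLp_top_of_bound (hmeas n).aestronglyMeasurable M
      (Eventually.of_forall fun ω => by rw [Real.norm_eq_abs]; exact hbd n ω)).mono_exponent
      le_top
  have hint : ∀ n, Integrable (X n) P := fun n => (hL2 n).integrable one_le_two
  set S : ℕ → Ω → ℝ := fun n => ∑ k ∈ Finset.range n, X k with hSdef
  have hSapp : ∀ n ω, S n ω = ∑ k ∈ Finset.range n, X k ω := by
    intro n ω; simp [hSdef]
  have hSL2 : ∀ n, MemLp (S n) 2 P := fun n => memLp_finsetSum' _ fun k _ => hL2 k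
  -- variance bound
  have hvb : ∀ n : ℕ, variance (S n) P ≤ M^2 * n := by
    intro n
    have hv : variance (S n) P = ∑ k ∈ Finset.range n, variance (X k) P := by
      refine IndepFun.variance_sum (fun k _ => hL2 k) ?_
      intro i _ j _ hij
      exact hindep.indepFun hij
    rw [hv]
    calc ∑ k ∈ Finset.range n, variance (X k) P ≤ ∑ _k ∈ Finset.range n, M^2 := by
          refine Finset.sum_le_sum fun k _ => ?_
          have h1 := variance_le_expectation_sq (μ := P) (hL2 k).aestronglyMeasurable
          refine h1.trans ?_
          have h2 : ∫ x, ((X k)^2) x ∂P ≤ ∫ _x, M^2 ∂P := by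
            refine integral_mono ?_ (integrable_const _) ?_
            · exact (hL2 k).integrable_sq
            · intro x
              have := hbd k x
              simp only [Pi.pow_apply]
              nlinarith [abs_nonneg (X k x), neg_abs_le (X k x), le_abs_self (X k x)]
          simpa [measure_univ] using h2
    _ = M^2 * n := by simp [mul_comm]
  -- mean of S n
  set B : ℕ → ℝ := fun n => ∫ ω, S n ω ∂P with hBdef
  have hBsum : ∀ n, B n = ∑ k ∈ Finset.range n, ∫ ω, X k ω ∂P := by
    intro n
    rw [hBdef]
    simp only [hSapp]
    exact integral_finset_sum _ fun k _ => hint k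
  have hBces : Tendsto (fun n : ℕ => B n / n) atTop (nhds 0) := by
    have := hmean.cesaro
    refine this.congr fun n => ?_
    rw [hBsum n, div_eq_inv_mul]
  -- Borel-Cantelli along squares
  set E : ℕ → ℕ → Set Ω := fun j m =>
    {ω | (((m:ℝ)+1)^2)/((j:ℝ)+1) ≤ |S ((m+1)^2) ω - P[S ((m+1)^2)]|} with hEdef
  have hae : ∀ᵐ ω ∂P, ∀ j : ℕ, {m : ℕ | ω ∈ E j m}.Finite := by
    rw [ae_all_iff]
    intro j
    refine ae_finite_setOf_mem ?_
    have hbound : ∀ m : ℕ, P (E j m) ≤ ENNReal.ofReal ((M^2 * ((j:ℝ)+1)^2) * (1/((m:ℝ)+1)^2)) := by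
      intro m
      have hc : (0:ℝ) < (((m:ℝ)+1)^2)/((j:ℝ)+1) := by positivity
      have h1 := meas_ge_le_variance_div_sq (μ := P) (hSL2 ((m+1)^2)) hc
      refine h1.trans (ENNReal.ofReal_le_ofReal ?_)
      have hv := hvb ((m+1)^2)
      have hcast : (((m+1)^2 : ℕ) : ℝ) = ((m:ℝ)+1)^2 := by push_cast; ring
      rw [hcast] at hv
      have hgoal : variance (S ((m+1)^2)) P / ((((m:ℝ)+1)^2/((j:ℝ)+1))^2)
          ≤ (M^2 * ((j:ℝ)+1)^2) * (1/((m:ℝ)+1)^2) := by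
        rw [div_le_iff₀ (by positivity)]
        have heq : (M^2 * ((j:ℝ)+1)^2) * (1/((m:ℝ)+1)^2) * ((((m:ℝ)+1)^2/((j:ℝ)+1))^2)
            = M^2 * ((m:ℝ)+1)^2 := by
          field_simp
        rw [heq]
        exact hv
      exact hgoal
    refine ne_top_of_le_ne_top ?_ (ENNReal.tsum_le_tsum hbound)
    rw [← ENNReal.ofReal_tsum_of_nonneg (fun m => by positivity) ?_]
    · exact ENNReal.ofReal_ne_top
    · refine Summable.mul_left _ ?_
      have h2 : Summable (fun m : ℕ => 1/((m:ℝ))^2) := by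
        rw [Real.summable_one_div_nat_pow]
        norm_num
      have := (summable_nat_add_iff 1).2 h2
      refine this.congr fun m => ?_
      push_cast
      ring
  -- conclusion, pointwise
  filter_upwards [hae] with ω hω
  -- convergence along squares
  have hsq : Tendsto (fun m : ℕ => (m+1)^2) atTop atTop := by
    refine tendsto_atTop_mono (fun m => ?_) tendsto_id
    simp only [id_eq, pow_two]
    nlinarith
  have hdiff : Tendsto (fun m : ℕ => (S ((m+1)^2) ω - B ((m+1)^2)) / (((m:ℝ)+1)^2))
      atTop (nhds 0) := by
    rw [Metric.tendsto_atTop]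
    intro ε hε
    obtain ⟨j, hj⟩ := exists_nat_one_div_lt hε
    have hfin := (hω j).eventually_cofinite_notMem
    rw [Nat.cofinite_eq_atTop] at hfin
    obtain ⟨m0, hm0⟩ := (eventually_atTop).1 hfin
    refine ⟨m0, fun m hm => ?_⟩
    have h1 := hm0 m hm
    rw [hEdef] at h1
    simp only [Set.mem_setOf_eq, not_le] at h1
    rw [Real.dist_eq, sub_zero, abs_div, abs_of_nonneg (by positivity : (0:ℝ) ≤ ((m:ℝ)+1)^2)]
    rw [div_lt_iff₀ (by positivity)]
    calc |S ((m+1)^2) ω - B ((m+1)^2)| < (((m:ℝ)+1)^2)/((j:ℝ)+1) := h1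
    _ = ((m:ℝ)+1)^2 * (1/((j:ℝ)+1)) := by ring
    _ ≤ ((m:ℝ)+1)^2 * ε := by
        have h2 : 1/((j:ℝ)+1) < ε := by exact_mod_cast hj
        exact mul_le_mul_of_nonneg_left h2.le (by positivity)
    _ = ε * ((m:ℝ)+1)^2 := by ring
  have hBm : Tendsto (fun m : ℕ => B ((m+1)^2) / (((m:ℝ)+1)^2)) atTop (nhds 0) := by
    have := hBces.comp hsq
    refine this.congr fun m => ?_
    simp only [Function.comp_apply]
    congr 1
    push_cast
    ring
  have hSm : Tendsto (fun m : ℕ => S ((m+1)^2) ω / (((m:ℝ)+1)^2)) atTop (nhds 0) := by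
    have := hdiff.add hBm
    rw [add_zero] at this
    refine this.congr fun m => ?_
    rw [sub_div]
    ring
  -- monotone interpolation
  set T : ℕ → ℝ := fun n => -(S n ω) with hTdef
  have hTmono : Monotone T := by
    refine monotone_nat_of_le_succ fun n => ?_
    simp only [hTdef, hSapp, Finset.sum_range_succ, neg_add]
    have := hneg n ω
    linarith
  have hT0 : ∀ n, 0 ≤ T n := by
    intro n
    have := hTmono (Nat.zero_le n)
    simpa [hTdef, hSapp] using this
  have hTm : Tendsto (fun m : ℕ => T ((m+1)^2) / (((m:ℝ)+1)^2)) atTop (nhds 0) := by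
    have h1 := hSm.neg
    rw [neg_zero] at h1
    refine h1.congr fun m => ?_
    rw [hTdef, neg_div]
  have hratio : Tendsto (fun m : ℕ => (((m:ℝ)+1)^2) / ((m:ℝ))^2) atTop (nhds 1) := by
    have h1 : Tendsto (fun m : ℕ => 1 + 1/(m:ℝ)) atTop (nhds 1) := by
      have h0 := tendsto_one_div_atTop_nhds_zero_nat (𝕜 := ℝ)
      have := (tendsto_const_nhds (x := (1:ℝ)) (f := atTop)).add h0
      rw [add_zero] at this
      exact this
    have h2 := h1.pow 2
    rw [one_pow] at h2
    refine h2.congr' ?_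
    filter_upwards [eventually_ge_atTop 1] with m hm
    have hm0 : (0:ℝ) < (m:ℝ) := by exact_mod_cast hm
    field_simp
  set g : ℕ → ℝ := fun m => (T ((m+1)^2) / (((m:ℝ)+1)^2)) * ((((m:ℝ)+1)^2) / ((m:ℝ))^2)
    with hgdef
  have hg : Tendsto g atTop (nhds 0) := by
    have := hTm.mul hratio
    rw [zero_mul] at this
    exact this
  have hsqrt : Tendsto Nat.sqrt atTop atTop :=
    tendsto_atTop_atTop_of_monotone (fun a b h => Nat.sqrt_le_sqrt h)
      (fun b => ⟨b^2, (Nat.sqrt_eq' b).ge⟩)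
  have hup : ∀ᶠ n : ℕ in atTop, T n / n ≤ g (Nat.sqrt n) := by
    filter_upwards [eventually_ge_atTop 1] with n hn
    set m := Nat.sqrt n with hmdef
    have hm1 : 1 ≤ m := Nat.sqrt_pos.2 hn
    have hmn : m^2 ≤ n := Nat.sqrt_le' n
    have hnm : n ≤ (m+1)^2 := by
      have h := Nat.lt_succ_sqrt n
      rw [pow_two]
      exact le_of_lt h
    have hTn : T n ≤ T ((m+1)^2) := hTmono hnm
    have hm0 : (0:ℝ) < (m:ℝ) := by exact_mod_cast hm1
    have hmn' : ((m:ℝ))^2 ≤ (n:ℝ) := by exact_mod_cast hmn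
    have hdiv : T n / n ≤ T ((m+1)^2) / ((m:ℝ))^2 :=
      div_le_div₀ (hT0 _) hTn (pow_pos hm0 2) hmn'
    refine hdiv.trans_eq ?_
    rw [hgdef]
    have hm10 : ((m:ℝ)+1) ≠ 0 := by positivity
    field_simp
  have hTlim : Tendsto (fun n : ℕ => T n / n) atTop (nhds 0) := by
    refine tendsto_of_tendsto_of_tendsto_of_le_of_le' tendsto_const_nhds (hg.comp hsqrt)
      (Eventually.of_forall fun n => div_nonneg (hT0 n) (Nat.cast_nonneg n)) hup
  have hfin := hTlim.neg
  rw [neg_zero] at hfin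
  refine hfin.congr fun n => ?_
  rw [hTdef]
  simp only [neg_div, neg_neg, hSapp]

/-!
STATEMENT 8:
Let (X_n) be independent, uniformly bounded, nonpositive real random variables with
E[X_n] → 0.  Then almost surely there is a subsequence of indices (n_j) of relative
density one (j / n_j → 1) along which X_{n_j} → 0.
-/

theorem stmt_8 {Ω : Type*} [MeasurableSpace Ω] (P : Measure Ω) [IsProbabilityMeasure P]
    (X : ℕ → Ω → ℝ) (hmeas : ∀ n, Measurable (X n))
    (hindep : iIndepFun X P)
    (M : ℝ) (hbd : ∀ n ω, |X n ω| ≤ M)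
    (hneg : ∀ n ω, X n ω ≤ 0)
    (hmean : Tendsto (fun n : ℕ => ∫ ω, X n ω ∂P) atTop (nhds 0)) :
    ∀ᵐ ω ∂P, ∃ n : ℕ → ℕ, StrictMono n ∧ (∀ j, 1 ≤ n j) ∧
      Tendsto (fun j : ℕ => (j : ℝ) / (n j : ℝ)) atTop (nhds 1) ∧
      Tendsto (fun j : ℕ => X (n j) ω) atTop (nhds 0) := by
  filter_upwards [slln_aux P X hmeas hindep M hbd hneg hmean] with ω hω
  exact det_density_one (fun n => X n ω) (fun n => hneg n ω) hω
end

section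
/- Let a = (a_1,...,a_d) ∈ ℂ^d be a random vector with i.i.d. coordinates of bounded density φ ≤ C, and let u ∈ ℂ^d with ‖u‖ = 1 and |u_1| ≥ 1/√d. Then for any measurable set A ⊂ ℂ, P{⟨a,u⟩ ∈ A} ≤ C·d·λ(A), where λ is Lebesgue measure on ℂ. -/
/-!
STATEMENT 15 (change of variables / anti-concentration for ⟨a,u⟩):
Let a = (a_1,...,a_d) ∈ ℂ^d have i.i.d. coordinates of bounded density φ ≤ C, and
let u ∈ ℂ^d with ‖u‖ = 1 and |u_1| ≥ 1/√d (such a coordinate always exists).  Then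
for any measurable A ⊂ ℂ, P{⟨a,u⟩ ∈ A} ≤ C·d·λ(A), λ Lebesgue measure on ℂ.
-/

open MeasureTheory
open scoped ENNReal

/-- The Lebesgue measure of `{x : ℂ | x * c + b ∈ A}` equals `(‖c‖²)⁻¹ · volume A`. -/
lemma volume_affine_preimage (c b : ℂ) (hc : c ≠ 0) (A : Set ℂ) :
    volume {x : ℂ | x * c + b ∈ A}
      = ENNReal.ofReal ((Complex.normSq c)⁻¹) * volume A := by
  have hdet : LinearMap.det (Algebra.lmul ℝ ℂ c) = Complex.normSq c := by
    rw [← Algebra.norm_apply, Algebra.norm_complex_apply]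
  have hdet' : LinearMap.det (Algebra.lmul ℝ ℂ c) ≠ 0 := by
    rw [hdet]; exact fun h => hc (Complex.normSq_eq_zero.mp h)
  have h1 : {x : ℂ | x * c + b ∈ A}
      = (Algebra.lmul ℝ ℂ c) ⁻¹' ((fun x => x + b) ⁻¹' A) := by
    ext x
    simp [Algebra.lmul, mul_comm]
  rw [h1, Measure.addHaar_preimage_linearMap volume hdet',
    measure_preimage_add_right volume b A, hdet]
  congr 1
  rw [abs_of_nonneg (inv_nonneg.mpr (Complex.normSq_nonneg c))]

theorem stmt_15 (d : ℕ) (hd : 0 < d) (C : ℝ)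
    (φ : ℂ → ℝ) (hφ : ∀ z, 0 ≤ φ z ∧ φ z ≤ C)
    (μ : Measure ℂ)
    (hμ : μ = volume.withDensity fun z => ENNReal.ofReal (φ z))
    (hprob : IsProbabilityMeasure μ)
    (u : Fin d → ℂ) (hu : ∑ j, ‖u j‖ ^ 2 = 1)
    (j₀ : Fin d) (hj₀ : 1 / Real.sqrt d ≤ ‖u j₀‖)
    (A : Set ℂ) (hA : MeasurableSet A) :
    (Measure.pi fun _ : Fin d => μ) {a : Fin d → ℂ | (∑ j, a j * u j) ∈ A}
      ≤ ENNReal.ofReal C * (d : ℝ≥0∞) * volume A := by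
  obtain ⟨n, rfl⟩ : ∃ n, d = n + 1 := ⟨d - 1, (Nat.succ_pred_eq_of_pos hd).symm⟩
  set c : ℂ := u j₀ with hc_def
  have hdpos : (0:ℝ) < Real.sqrt (n+1) := Real.sqrt_pos.mpr (by positivity)
  have hcnorm : 1 / Real.sqrt (n+1) ≤ ‖c‖ := by
    simpa using hj₀
  have hc : c ≠ 0 := by
    intro h
    rw [h, norm_zero] at hcnorm
    exact absurd hcnorm (not_le.mpr (by positivity))
  -- lower bound on normSq c
  have hnsq : (1:ℝ)/(n+1) ≤ Complex.normSq c := by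
    have := mul_self_le_mul_self (by positivity : (0:ℝ) ≤ 1 / Real.sqrt (n+1)) hcnorm
    calc (1:ℝ)/(n+1) = (1/Real.sqrt (n+1)) * (1/Real.sqrt (n+1)) := by
          rw [div_mul_div_comm, one_mul, Real.mul_self_sqrt (by positivity)]
      _ ≤ ‖c‖ * ‖c‖ := this
      _ = Complex.normSq c := by rw [Complex.normSq_eq_norm_sq, sq]
  have hnsq_inv : (Complex.normSq c)⁻¹ ≤ (n+1 : ℝ) := by
    rw [inv_le_comm₀ (Complex.normSq_pos.mpr hc) (by positivity)]
    · calc ((n:ℝ)+1)⁻¹ = 1/(n+1) := by rw [one_div]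
        _ ≤ Complex.normSq c := hnsq
  have hC0 : 0 ≤ C := (hφ 0).1.trans (hφ 0).2
  -- measure preserving splitting
  have hmp := measurePreserving_piFinSuccAbove (fun _ : Fin (n+1) => μ) j₀
  set e := MeasurableEquiv.piFinSuccAbove (fun _ : Fin (n+1) => ℂ) j₀
  set T : Set (ℂ × (Fin n → ℂ)) :=
    {p | p.1 * c + ∑ i, p.2 i * u (j₀.succAbove i) ∈ A} with hT_def
  have hTmeas : MeasurableSet T := by
    apply MeasurableSet.preimage hA
    fun_prop
  have hSe : {a : Fin (n+1) → ℂ | (∑ j, a j * u j) ∈ A} = e ⁻¹' T := by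
    ext a
    have : (∑ j, a j * u j) = a j₀ * u j₀ + ∑ i, a (j₀.succAbove i) * u (j₀.succAbove i) :=
      Fin.sum_univ_succAbove (fun j => a j * u j) j₀
    simp only [Set.mem_setOf_eq, Set.mem_preimage, hT_def]
    rw [this]
    constructor
    · intro h; convert h using 3 <;> rfl
    · intro h; convert h using 3 <;> rfl
  rw [hSe, hmp.measure_preimage hTmeas.nullMeasurableSet]
  rw [Measure.prod_apply_symm hTmeas]
  -- bound the inner slice measure
  have key : ∀ y : Fin n → ℂ,
      μ ((fun x => (x, y)) ⁻¹' T) ≤ ENNReal.ofReal C * ((n:ℝ≥0∞)+1) * volume A := by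
    intro y
    set b : ℂ := ∑ i, y i * u (j₀.succAbove i)
    have hslice : (fun x : ℂ => (x, y)) ⁻¹' T = {x : ℂ | x * c + b ∈ A} := rfl
    have hsm : MeasurableSet {x : ℂ | x * c + b ∈ A} := by
      apply MeasurableSet.preimage hA; fun_prop
    rw [hslice, hμ, withDensity_apply _ hsm]
    calc ∫⁻ x in {x : ℂ | x * c + b ∈ A}, ENNReal.ofReal (φ x)
        ≤ ∫⁻ _ in {x : ℂ | x * c + b ∈ A}, ENNReal.ofReal C := by
          apply lintegral_mono
          intro x; exact ENNReal.ofReal_le_ofReal (hφ x).2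
      _ = ENNReal.ofReal C * volume {x : ℂ | x * c + b ∈ A} := by
          rw [setLIntegral_const]
      _ = ENNReal.ofReal C * (ENNReal.ofReal ((Complex.normSq c)⁻¹) * volume A) := by
          rw [volume_affine_preimage c b hc A]
      _ ≤ ENNReal.ofReal C * (((n:ℝ≥0∞)+1) * volume A) := by
          gcongr
          calc ENNReal.ofReal ((Complex.normSq c)⁻¹) ≤ ENNReal.ofReal ((n:ℝ)+1) :=
                ENNReal.ofReal_le_ofReal hnsq_inv
            _ = (n:ℝ≥0∞)+1 := by
                rw [ENNReal.ofReal_add (by positivity) zero_le_one]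
                simp [ENNReal.ofReal_natCast]
      _ = ENNReal.ofReal C * ((n:ℝ≥0∞)+1) * volume A := by ring
  calc ∫⁻ y, μ ((fun x => (x, y)) ⁻¹' T) ∂(Measure.pi fun _ : Fin n => μ)
      ≤ ∫⁻ _, ENNReal.ofReal C * ((n:ℝ≥0∞)+1) * volume A
          ∂(Measure.pi fun _ : Fin n => μ) := lintegral_mono key
    _ = ENNReal.ofReal C * ((n:ℝ≥0∞)+1) * volume A := by
        rw [lintegral_const, measure_univ, mul_one]
    _ = ENNReal.ofReal C * ((n+1 : ℕ) : ℝ≥0∞) * volume A := by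
        push_cast; ring
end
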